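/- In a Q-metric space with Q continuous, for every A ⊆ X the closure of A in the dual open ball topology τ_d^o equals ∩_{δ≪1} B_R(A,δ). -/

import Mathlib

/-- `a` is way-below `b`: for every nonempty directed `D` with `b ≤ sSup D`,
some element of `D` dominates `a`. -/
def WayBelow {Q : Type*} [CompleteLattice Q] (a b : Q) : Prop :=
  ∀ D : Set Q, D.Nonempty → DirectedOn (· ≤ ·) D → b ≤ sSup D → ∃ d ∈ D, a ≤ d

/-- A complete lattice is continuous if every element is the join of the
elements way-below it. -/
def ContinuousLattice (Q : Type*) [CompleteLattice Q] : Prop :=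
  ∀ x : Q, x = sSup {y | WayBelow y x}

/-- `B_R(A,δ)`: points belonging to `A` with precision greater than `δ`. -/
def BR {Q X : Type*} [CompleteLattice Q] (d : X → X → Q) (A : Set X) (δ : Q) : Set X :=
  {y | ∃ x ∈ A, WayBelow δ (d x y)}

/-- Dual open ball. -/
def ballo {Q X : Type*} [CompleteLattice Q] (d : X → X → Q) (x : X) (δ : Q) : Set X :=
  {y | WayBelow δ (d y x)}

namespace WayBelowAux

variable {Q : Type*} [CompleteLattice Q]

theorem wb_bot (b : Q) : WayBelow ⊥ b := by
  intro D hne _ _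
  obtain ⟨c, hc⟩ := hne
  exact ⟨c, hc, bot_le⟩

theorem wb_of_le_wb {a b c : Q} (h : a ≤ b) (hb : WayBelow b c) : WayBelow a c := by
  intro D hne hdir hle
  obtain ⟨e, he, hbe⟩ := hb D hne hdir hle
  exact ⟨e, he, h.trans hbe⟩

theorem wb_of_wb_le {a b c : Q} (hb : WayBelow a b) (h : b ≤ c) : WayBelow a c := by
  intro D hne hdir hle
  exact hb D hne hdir (h.trans hle)

theorem wb_le {a b : Q} (h : WayBelow a b) : a ≤ b := by
  obtain ⟨e, he, hae⟩ := h {b} ⟨b, rfl⟩ (directedOn_singleton b) (by simp)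
  simpa using hae.trans (le_of_eq (by simpa using he))

theorem wb_sup {a b c : Q} (ha : WayBelow a c) (hb : WayBelow b c) : WayBelow (a ⊔ b) c := by
  intro D hne hdir hle
  obtain ⟨e₁, he₁, h₁⟩ := ha D hne hdir hle
  obtain ⟨e₂, he₂, h₂⟩ := hb D hne hdir hle
  obtain ⟨e, he, hee₁, hee₂⟩ := hdir e₁ he₁ e₂ he₂
  exact ⟨e, he, sup_le (h₁.trans hee₁) (h₂.trans hee₂)⟩

theorem directedOn_wb (x : Q) : DirectedOn (· ≤ ·) {y | WayBelow y x} := by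
  intro a ha b hb
  exact ⟨a ⊔ b, wb_sup ha hb, le_sup_left, le_sup_right⟩

/-- Interpolation property in a continuous lattice. -/
theorem interpolate (hcont : ContinuousLattice Q) {a b : Q} (h : WayBelow a b) :
    ∃ c, WayBelow a c ∧ WayBelow c b := by
  set D : Set Q := {u | ∃ v, WayBelow u v ∧ WayBelow v b} with hD
  have hne : D.Nonempty := ⟨⊥, ⊥, wb_bot ⊥, wb_bot b⟩
  have hdir : DirectedOn (· ≤ ·) D := by
    intro u₁ hu₁ u₂ hu₂
    obtain ⟨v₁, huv₁, hv₁⟩ := hu₁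
    obtain ⟨v₂, huv₂, hv₂⟩ := hu₂
    obtain ⟨v, hv, h₁, h₂⟩ := directedOn_wb b v₁ hv₁ v₂ hv₂
    exact ⟨u₁ ⊔ u₂, ⟨v, wb_sup (wb_of_wb_le huv₁ h₁) (wb_of_wb_le huv₂ h₂), hv⟩,
      le_sup_left, le_sup_right⟩
  have hsup : b ≤ sSup D := by
    conv_lhs => rw [hcont b]
    apply sSup_le
    intro v hv
    conv_lhs => rw [hcont v]
    apply sSup_le
    intro u hu
    exact le_sSup ⟨v, hu, hv⟩
  obtain ⟨u, ⟨v, huv, hvb⟩, hau⟩ := h D hne hdir hsup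
  exact ⟨v, wb_of_le_wb hau huv, hvb⟩

end WayBelowAux

open WayBelowAux in
/-- For `δ ≪ b` in a continuous quantale there is `γ ≪ 1` with `δ ≪ γ * b`. -/
theorem exists_gamma {Q : Type*} [CompleteLattice Q] [Monoid Q] [IsQuantale Q]
    (hcont : ContinuousLattice Q) {δ b : Q} (h : WayBelow δ b) :
    ∃ γ, WayBelow γ 1 ∧ WayBelow δ (γ * b) := by
  obtain ⟨ε, hδε, hεb⟩ := interpolate hcont h
  set D : Set Q := (· * b) '' {γ | WayBelow γ 1} with hD
  have hne : D.Nonempty := ⟨⊥ * b, ⊥, wb_bot 1, rfl⟩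
  have hdir : DirectedOn (· ≤ ·) D := by
    rintro _ ⟨γ₁, h₁, rfl⟩ _ ⟨γ₂, h₂, rfl⟩
    exact ⟨(γ₁ ⊔ γ₂) * b, ⟨γ₁ ⊔ γ₂, wb_sup h₁ h₂, rfl⟩,
      mul_le_mul_left le_sup_left b, mul_le_mul_left le_sup_right b⟩
  have hsup : b ≤ sSup D := by
    have : b = sSup {γ | WayBelow γ 1} * b := by
      conv_lhs => rw [← one_mul b, hcont 1]
    rw [this, sSup_mul_distrib]
    apply iSup_le; intro γ; apply iSup_le; intro hγ
    exact le_sSup ⟨γ, hγ, rfl⟩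
  obtain ⟨_, ⟨γ, hγ, rfl⟩, hεγ⟩ := hεb D hne hdir hsup
  exact ⟨γ, hγ, wb_of_wb_le hδε hεγ⟩

open WayBelowAux in
theorem dual_closure_eq_iInter_BR {Q X : Type*} [CompleteLattice Q] [Monoid Q] [IsQuantale Q]
    (hcont : ContinuousLattice Q) (d : X → X → Q)
    (hrefl : ∀ x : X, 1 ≤ d x x) (htri : ∀ x y z : X, d x y * d y z ≤ d x z)
    (A : Set X) :
    @closure X (TopologicalSpace.generateFrom
        {s | ∃ (x : X) (δ : Q), WayBelow δ 1 ∧ s = ballo d x δ}) A =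
      ⋂ δ ∈ {δ : Q | WayBelow δ 1}, BR d A δ := by
  letI t : TopologicalSpace X := TopologicalSpace.generateFrom
      {s | ∃ (x : X) (δ : Q), WayBelow δ 1 ∧ s = ballo d x δ}
  -- key: every open set containing y contains a "ball centered at y"
  have key : ∀ U : Set X, @IsOpen X t U → ∀ y ∈ U,
      ∃ γ, WayBelow γ 1 ∧ {w | WayBelow γ (d w y)} ⊆ U := by
    intro U hU
    induction hU with
    | basic s hs =>
      obtain ⟨x, δ, hδ, rfl⟩ := hs
      intro y hy
      obtain ⟨γ, hγ1, hγ⟩ := exists_gamma hcont hy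
      refine ⟨γ, hγ1, fun w hw => ?_⟩
      have : γ * d y x ≤ d w x :=
        le_trans (mul_le_mul_left (wb_le hw) _) (htri w y x)
      exact wb_of_wb_le hγ this
    | univ => exact fun y _ => ⟨⊥, wb_bot 1, fun _ _ => trivial⟩
    | inter U V _ _ ihU ihV =>
      intro y hy
      obtain ⟨γ₁, h₁, hs₁⟩ := ihU y hy.1
      obtain ⟨γ₂, h₂, hs₂⟩ := ihV y hy.2
      refine ⟨γ₁ ⊔ γ₂, wb_sup h₁ h₂, fun w hw => ?_⟩
      exact ⟨hs₁ (wb_of_le_wb le_sup_left hw), hs₂ (wb_of_le_wb le_sup_right hw)⟩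
    | sUnion S _ ih =>
      intro y hy
      obtain ⟨s, hs, hys⟩ := hy
      obtain ⟨γ, hγ, hsub⟩ := ih s hs y hys
      exact ⟨γ, hγ, hsub.trans (Set.subset_sUnion_of_mem hs)⟩
  ext y
  simp only [Set.mem_iInter, Set.mem_setOf_eq]
  constructor
  · -- closure ⊆ ⋂ BR
    intro hy δ hδ
    have hball : @IsOpen X t (ballo d y δ) :=
      TopologicalSpace.isOpen_generateFrom_of_mem ⟨y, δ, hδ, rfl⟩
    have hyy : y ∈ ballo d y δ := wb_of_wb_le hδ (hrefl y)
    obtain ⟨x, hxb, hxA⟩ := (mem_closure_iff (x:=y) (s:=A)).mp hy _ hball hyy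
    exact ⟨x, hxA, hxb⟩
  · -- ⋂ BR ⊆ closure
    intro hy
    rw [mem_closure_iff (x:=y) (s:=A)]
    intro U hU hyU
    obtain ⟨γ, hγ1, hsub⟩ := key U hU y hyU
    obtain ⟨x, hxA, hx⟩ := hy γ hγ1
    exact ⟨x, hsub hx, hxA⟩
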